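/- Let A and B be skew-symmetric bilinear forms on a finite-dimensional vector space V over an algebraically closed field of characteristic zero, with B nondegenerate. Then there exists a basis of V in which the matrices of A and B are simultaneously block-diagonal, with each pair of corresponding blocks being a Jordan block pair: A_i has the form with eigenvalue λ_i in the upper-right block (λ_i on the diagonal, 1 on the superdiagonal) and its negative transpose in the lower-left, while B_i is the standard symplectic block with identity in the upper-right and minus identity in the lower-left. -/

import Mathlib

open Matrix

/-- The `m × m` Jordan-type upper block: `λ` on the diagonal, `1` on the
superdiagonal. -/
def jordanUpper {K : Type*} [Field K] (lam : K) (m : ℕ) :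
    Matrix (Fin m) (Fin m) K :=
  fun i j => if (i : ℕ) = (j : ℕ) then lam else if (i : ℕ) + 1 = (j : ℕ) then 1 else 0

/-- The `2m × 2m` Jordan block of the pencil with eigenvalue `λ`:
`[[0, J(λ)], [-J(λ)ᵀ, 0]]`. -/
def jordanBlockA {K : Type*} [Field K] (lam : K) (m : ℕ) :
    Matrix (Fin m ⊕ Fin m) (Fin m ⊕ Fin m) K :=
  Matrix.fromBlocks 0 (jordanUpper lam m) (-(jordanUpper lam m)ᵀ) 0

/-- The standard symplectic `2m × 2m` block `[[0, I], [-I, 0]]`. -/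
def jordanBlockB {K : Type*} [Field K] (m : ℕ) :
    Matrix (Fin m ⊕ Fin m) (Fin m ⊕ Fin m) K :=
  Matrix.fromBlocks 0 (1 : Matrix (Fin m) (Fin m) K) (-1) 0


section JKAux

noncomputable def normCoeff {K : Type*} [Field K] (c : ℕ → K) (m : ℕ) : ℕ → K
  | t =>
    (if t = 0 then 1 else
      -(∑ j ∈ (Finset.range t).attach, normCoeff c m j * c (m - 1 - t + j))) * (c (m - 1))⁻¹
  decreasing_by exact Finset.mem_range.mp j.2

lemma normCoeff_spec {K : Type*} [Field K] (c : ℕ → K) (m : ℕ) (hc : c (m-1) ≠ 0)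
    (hhigh : ∀ i, m ≤ i → c i = 0) :
    ∀ k < m, (∑ j ∈ Finset.range m, normCoeff c m j * c (k + j)) = if k = m - 1 then 1 else 0 := by
  intro k hk
  obtain ⟨t, htk⟩ : ∃ t, t = m - 1 - k := ⟨_, rfl⟩
  have htm : t + 1 ≤ m := by omega
  have hsplit : (∑ j ∈ Finset.range m, normCoeff c m j * c (k + j))
      = ∑ j ∈ Finset.range (t+1), normCoeff c m j * c (k + j) := by
    refine (Finset.sum_subset (by intro x hx; simp at hx ⊢; omega) ?_).symm
    intro x _ hx
    rw [Finset.mem_range, not_lt] at hx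
    rw [hhigh (k + x) (by omega), mul_zero]
  rw [hsplit, Finset.sum_range_succ]
  have hck : k + t = m - 1 := by omega
  rw [hck, normCoeff]
  rcases eq_or_ne t 0 with h0 | h0
  · rw [h0] at hck ⊢
    rw [if_pos rfl, if_pos (show k = m - 1 by omega)]
    simp [inv_mul_cancel₀ hc]
  · rw [if_neg h0, if_neg (show ¬ k = m - 1 by omega)]
    rw [Finset.sum_attach (Finset.range t) (fun j => normCoeff c m j * c (m - 1 - t + j))]
    have hj : ∀ j, m - 1 - t + j = k + j := fun j => by omega
    simp only [hj]
    rw [neg_mul, neg_mul, mul_assoc, inv_mul_cancel₀ hc, mul_one, add_neg_cancel]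


section Aux
variable {K V : Type*} [Field K] [AddCommGroup V] [Module K V]

lemma shift_pow {B : V →ₗ[K] V →ₗ[K] K} {N : Module.End K V}
    (h : ∀ u v, B (N u) v = B u (N v)) :
    ∀ (a : ℕ) (u v : V), B ((N ^ a) u) v = B u ((N ^ a) v) := by
  intro a
  induction a with
  | zero => intro u v; simp
  | succ a ih =>
    intro u v
    have h1 : (N ^ (a+1)) u = (N ^ a) (N u) := by rw [pow_succ]; rfl
    have h2 : (N ^ (a+1)) v = N ((N ^ a) v) := by rw [pow_succ']; rfl
    rw [h1, h2, ih (N u) v, h]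

lemma alt_pow [CharZero K] {B : V →ₗ[K] V →ₗ[K] K} {N : Module.End K V}
    (hB : ∀ u v, B u v = - B v u)
    (h : ∀ u v, B (N u) v = B u (N v)) (k : ℕ) (u : V) :
    B u ((N ^ k) u) = 0 := by
  have h1 : B ((N ^ k) u) u = B u ((N ^ k) u) := shift_pow h k u u
  have h2 : B u ((N ^ k) u) = - B ((N ^ k) u) u := hB _ _
  rw [h1] at h2
  have h4 : (2 : K) * B u ((N ^ k) u) = 0 := by linear_combination h2
  rcases mul_eq_zero.mp h4 with h | h
  · exact absurd h two_ne_zero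
  · exact h

lemma ortho_gen (B : V →ₗ[K] V →ₗ[K] K) (R : Module.End K V)
    (hsym : ∀ u v, B (R u) v = B u (R v)) {lam mu : K} (hne : lam ≠ mu) :
    ∀ (s k l : ℕ) (u v : V), k + l ≤ s →
      ((R - lam • 1) ^ k) u = 0 → ((R - mu • 1) ^ l) v = 0 → B u v = 0 := by
  intro s
  induction s with
  | zero =>
    intro k l u v hs hu hv
    have hk : k = 0 := by omega
    subst hk
    rw [pow_zero, Module.End.one_apply] at hu
    rw [hu]; simp
  | succ s ih =>
    intro k l u v hs hu hv
    rcases Nat.eq_zero_or_pos k with hk | hk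
    · subst hk; rw [pow_zero, Module.End.one_apply] at hu; rw [hu]; simp
    rcases Nat.eq_zero_or_pos l with hl | hl
    · subst hl; rw [pow_zero, Module.End.one_apply] at hv; rw [hv]; simp
    obtain ⟨k', rfl⟩ : ∃ k', k = k' + 1 := ⟨k - 1, by omega⟩
    obtain ⟨l', rfl⟩ : ∃ l', l = l' + 1 := ⟨l - 1, by omega⟩
    have hu' : ((R - lam • 1) ^ k') ((R - lam • 1) u) = 0 := by
      rw [← Module.End.mul_apply, ← pow_succ]; exact hu
    have hv' : ((R - mu • 1) ^ l') ((R - mu • 1) v) = 0 := by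
      rw [← Module.End.mul_apply, ← pow_succ]; exact hv
    have h1 : B ((R - lam • 1) u) v = 0 := ih k' (l'+1) _ v (by omega) hu' hv
    have h2 : B u ((R - mu • 1) v) = 0 := ih (k'+1) l' u _ (by omega) hu hv'
    have e1 : (R - lam • 1) u = R u - lam • u := by simp [LinearMap.sub_apply]
    have e2 : (R - mu • 1) v = R v - mu • v := by simp [LinearMap.sub_apply]
    rw [e1] at h1; rw [e2] at h2
    have hh1 : B (R u) v = lam * B u v := by
      rw [map_sub, LinearMap.sub_apply, _root_.map_smul, LinearMap.smul_apply,
        smul_eq_mul] at h1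
      have := sub_eq_zero.mp h1; rw [this]
    have hh2 : B u (R v) = mu * B u v := by
      rw [map_sub, _root_.map_smul, smul_eq_mul] at h2
      have := sub_eq_zero.mp h2; rw [this]
    have h3 : lam * B u v = mu * B u v := by rw [← hh1, ← hh2]; exact hsym u v
    have h4 : (lam - mu) * B u v = 0 := by linear_combination h3
    rcases mul_eq_zero.mp h4 with h | h
    · exact absurd (sub_eq_zero.mp h) hne
    · exact h

end Aux

lemma exists_jordan_chain {K V : Type*} [Field K] [IsAlgClosed K] [CharZero K]
    [AddCommGroup V] [Module K V] [FiniteDimensional K V]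
    (A B : V →ₗ[K] V →ₗ[K] K)
    (hA : ∀ u v, A u v = - A v u) (hB : ∀ u v, B u v = - B v u)
    (hBnd : B.Nondegenerate) (hV : Nontrivial V) :
    ∃ (m : ℕ) (_ : 0 < m) (lam : K) (g : Fin m ⊕ Fin m → V),
      (∀ p q, B (g p) (g q) = jordanBlockB m p q) ∧
      (∀ p q, A (g p) (g q) = jordanBlockA lam m p q) ∧
      (∀ u, (∀ p, B (g p) u = 0) → ∀ p, A (g p) u = 0) := by
  classical
  -- the recursion operator
  set R : Module.End K V :=
    (((LinearMap.BilinForm.toDual B hBnd).symm : Module.Dual K V →ₗ[K] V).comp A) with hRdef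
  have hR : ∀ u v, B (R u) v = A u v := by
    intro u v
    exact LinearMap.BilinForm.apply_toDual_symm_apply (hB := hBnd) (A u) v
  have hsym : ∀ u v, B (R u) v = B u (R v) := by
    intro u v
    rw [hR]
    have h1 : B u (R v) = - B (R v) u := hB _ _
    rw [h1, hR, ← hA]
  -- eigenvalue
  obtain ⟨lam, hlam⟩ := Module.End.exists_eigenvalue R
  set N : Module.End K V := R - lam • 1 with hNdef
  have hNsym : ∀ u v, B (N u) v = B u (N v) := by
    intro u v
    have e1 : N u = R u - lam • u := by simp [hNdef, LinearMap.sub_apply]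
    have e2 : N v = R v - lam • v := by simp [hNdef, LinearMap.sub_apply]
    rw [e1, e2, map_sub, _root_.map_smul, map_sub, _root_.map_smul,
      LinearMap.sub_apply, LinearMap.smul_apply, hsym]
  have hshift := shift_pow hNsym
  have halt := alt_pow hB hNsym
  set U := R.maxGenEigenspace lam with hUdef
  -- U is killed by a power of N
  set fr := Module.finrank K V with hfr
  have hUkill : ∀ u ∈ U, (N ^ fr) u = 0 := by
    intro u hu
    rw [hUdef, Module.End.maxGenEigenspace_eq_genEigenspace_finrank,
      Module.End.mem_genEigenspace] at hu
    obtain ⟨l, hl, hker⟩ := hu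
    rw [LinearMap.mem_ker] at hker
    have hl' : l ≤ fr := by exact_mod_cast hl
    have : (N ^ fr) u = (N ^ (fr - l)) ((N ^ l) u) := by
      rw [← Module.End.mul_apply, ← pow_add, Nat.sub_add_cancel hl']
    rw [this, hker, map_zero]
  -- membership in U
  have hmemU : ∀ u, u ∈ U ↔ ∃ k : ℕ, (N ^ k) u = 0 := by
    intro u
    rw [hUdef]
    exact Module.End.mem_maxGenEigenspace R lam u
  have hNU : ∀ u ∈ U, N u ∈ U := by
    intro u hu
    rw [hmemU] at hu ⊢
    obtain ⟨k, hk⟩ := hu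
    refine ⟨k, ?_⟩
    have e : (N ^ k) (N u) = N ((N ^ k) u) := by
      rw [← Module.End.mul_apply, ← pow_succ, pow_succ', Module.End.mul_apply]
    rw [e, hk, map_zero]
  have hNpowU : ∀ (j : ℕ) (u), u ∈ U → (N ^ j) u ∈ U := by
    intro j
    induction j with
    | zero => intro u hu; simpa using hu
    | succ j ih =>
      intro u hu
      have : (N ^ (j+1)) u = N ((N ^ j) u) := by rw [pow_succ']; rfl
      rw [this]
      exact hNU _ (ih u hu)
  -- eigenvector
  obtain ⟨x₀, hx₀⟩ := hlam.exists_hasEigenvector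
  have hx₀U : x₀ ∈ U := by
    rw [hmemU]
    refine ⟨1, ?_⟩
    rw [pow_one]
    have := hx₀.apply_eq_smul
    simp [hNdef, LinearMap.sub_apply, this]
  -- minimal power m killing U
  have hPex : ∃ j, ∀ u ∈ U, (N ^ j) u = 0 := ⟨fr, hUkill⟩
  set m := Nat.find hPex with hmdef
  have hPm : ∀ u ∈ U, (N ^ m) u = 0 := Nat.find_spec hPex
  have hm_pos : 0 < m := by
    rcases Nat.eq_zero_or_pos m with h0 | h
    · exfalso
      have := hPm x₀ hx₀U
      rw [h0, pow_zero, Module.End.one_apply] at this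
      exact hx₀.right this
    · exact h
  have hnotPm : ¬ (∀ u ∈ U, (N ^ (m-1)) u = 0) := Nat.find_min hPex (by omega)
  push_neg at hnotPm
  obtain ⟨x, hxU, hx⟩ := hnotPm
  -- find y ∈ U pairing with N^(m-1) x
  have hkey : ∃ y ∈ U, B ((N ^ (m-1)) x) y ≠ 0 := by
    by_contra hcon
    push_neg at hcon
    have hall : ∀ mu : K, R.maxGenEigenspace mu ≤ LinearMap.ker (B ((N ^ (m-1)) x)) := by
      intro mu v hv
      rw [LinearMap.mem_ker]
      rcases eq_or_ne lam mu with rfl | hne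
      · exact hcon v hv
      · rw [Module.End.mem_maxGenEigenspace] at hv
        obtain ⟨k, hk⟩ := hv
        have hu0 : ((R - lam • 1) ^ fr) ((N ^ (m-1)) x) = 0 := by
          have : (N ^ (m-1)) x ∈ U := hNpowU (m-1) x hxU
          exact hUkill _ this
        exact ortho_gen B R hsym hne (fr + k) fr k _ v le_rfl hu0 hk
    have htop : (⊤ : Submodule K V) ≤ LinearMap.ker (B ((N ^ (m-1)) x)) := by
      rw [← Module.End.iSup_maxGenEigenspace_eq_top R]
      exact iSup_le hall
    apply hx
    apply hBnd.1
    intro v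
    exact LinearMap.mem_ker.mp (htop (Submodule.mem_top : v ∈ ⊤))
  obtain ⟨y, hyU, hy⟩ := hkey
  -- coefficient sequence
  set c : ℕ → K := fun i => B x ((N ^ i) y) with hcdef
  have hcm : c (m-1) ≠ 0 := by
    rw [hcdef]
    simpa [← hshift (m-1) x y] using hy
  have hchigh : ∀ i, m ≤ i → c i = 0 := by
    intro i hi
    rw [hcdef]
    have : (N ^ i) y = (N ^ (i - m)) ((N ^ m) y) := by
      rw [← Module.End.mul_apply, ← pow_add, Nat.sub_add_cancel hi]
    simp [this, hPm y hyU]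
  -- normalized generator y'
  set y' : V := ∑ j ∈ Finset.range m, normCoeff c m j • ((N ^ j) y) with hy'def
  have hy'U : y' ∈ U := by
    refine Submodule.sum_mem _ (fun j _ => Submodule.smul_mem _ _ ?_)
    exact hNpowU j y hyU
  have hc' : ∀ k : ℕ, B x ((N ^ k) y') = if k = m - 1 then 1 else 0 := by
    intro k
    have hexp : (N ^ k) y' = ∑ j ∈ Finset.range m, normCoeff c m j • ((N ^ (k+j)) y) := by
      rw [hy'def, map_sum]
      refine Finset.sum_congr rfl (fun j _ => ?_)
      rw [_root_.map_smul, ← Module.End.mul_apply, ← pow_add]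
    rw [hexp, map_sum]
    have : ∀ j ∈ Finset.range m, B x (normCoeff c m j • ((N ^ (k+j)) y))
        = normCoeff c m j * c (k + j) := by
      intro j _
      rw [_root_.map_smul, smul_eq_mul, hcdef]
    rw [Finset.sum_congr rfl this]
    rcases lt_or_ge k m with hk | hk
    · exact normCoeff_spec c m hcm hchigh k hk
    · rw [if_neg (by omega)]
      refine Finset.sum_eq_zero (fun j _ => ?_)
      rw [hchigh (k + j) (by omega), mul_zero]
  -- Gram scalar identities
  have hxx : ∀ a b : ℕ, B ((N ^ a) x) ((N ^ b) x) = 0 := by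
    intro a b
    rw [hshift a, ← Module.End.mul_apply, ← pow_add, halt]
  have hyy : ∀ a b : ℕ, B ((N ^ a) y') ((N ^ b) y') = 0 := by
    intro a b
    rw [hshift a, ← Module.End.mul_apply, ← pow_add, halt]
  have hxy : ∀ a b : ℕ, B ((N ^ a) x) ((N ^ b) y') = if a + b = m - 1 then 1 else 0 := by
    intro a b
    rw [hshift a, ← Module.End.mul_apply, ← pow_add, hc']
  have hyx : ∀ a b : ℕ, B ((N ^ a) y') ((N ^ b) x) = - (if b + a = m - 1 then 1 else 0) := by
    intro a b
    rw [hB, hxy]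
  -- nilpotency at the top
  have hxm : (N ^ m) x = 0 := hPm x hxU
  have hy'm : (N ^ m) y' = 0 := hPm y' hy'U
  -- step identity
  have hstep : ∀ (a : ℕ) (v : V), N ((N ^ a) v) = (N ^ (a+1)) v := by
    intro a v
    rw [pow_succ']
    rfl
  -- expansion of A through B
  have hAexp : ∀ u v, A u v = lam * B u v + B (N u) v := by
    intro u v
    rw [← hR u v]
    have hru : R u = lam • u + N u := by
      simp [hNdef, LinearMap.sub_apply]
    rw [hru, map_add, LinearMap.add_apply, _root_.map_smul, LinearMap.smul_apply, smul_eq_mul]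
  -- the chain family
  set g : Fin m ⊕ Fin m → V := Sum.elim (fun i : Fin m => (N ^ (i : ℕ)) x)
    (fun j : Fin m => (N ^ (m - 1 - (j : ℕ))) y') with hgdef
  have hgl : ∀ i : Fin m, g (Sum.inl i) = (N ^ (i : ℕ)) x := fun i => rfl
  have hgr : ∀ j : Fin m, g (Sum.inr j) = (N ^ (m - 1 - (j : ℕ))) y' := fun j => rfl
  have hAul : ∀ i j : Fin m, A ((N ^ (i : ℕ)) x) ((N ^ (m - 1 - (j : ℕ))) y')
      = jordanUpper lam m i j := by
    intro i j
    rw [hAexp, hstep, hxy, hxy]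
    have hi := i.isLt; have hj := j.isLt
    have h1 : ((i : ℕ) + (m - 1 - (j : ℕ)) = m - 1) ↔ ((i : ℕ) = (j : ℕ)) := by omega
    have h2 : ((i : ℕ) + 1 + (m - 1 - (j : ℕ)) = m - 1) ↔ ((i : ℕ) + 1 = (j : ℕ)) := by omega
    rw [jordanUpper]
    by_cases hc1 : (i : ℕ) = (j : ℕ)
    · rw [if_pos ((h1.mpr hc1)), if_pos hc1, if_neg (by omega), mul_one, add_zero]
    · rw [if_neg (fun hk => hc1 (h1.mp hk)), if_neg hc1, mul_zero, zero_add]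
      by_cases hc2 : (i : ℕ) + 1 = (j : ℕ)
      · rw [if_pos (h2.mpr hc2), if_pos hc2]
      · rw [if_neg (fun hk => hc2 (h2.mp hk)), if_neg hc2]
  refine ⟨m, hm_pos, lam, g, ?_, ?_, ?_⟩
  · rintro (i | i) (j | j)
    · rw [hgl, hgl, hxx]
      simp [jordanBlockB]
    · rw [hgl, hgr, hxy]
      have hi := i.isLt; have hj := j.isLt
      have h1 : ((i : ℕ) + (m - 1 - (j : ℕ)) = m - 1) ↔ (i = j) := by
        rw [Fin.ext_iff]; omega
      simp [jordanBlockB, Matrix.one_apply, h1]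
    · rw [hgr, hgl, hyx]
      have hi := i.isLt; have hj := j.isLt
      have h1 : ((j : ℕ) + (m - 1 - (i : ℕ)) = m - 1) ↔ (i = j) := by
        rw [Fin.ext_iff]; omega
      simp [jordanBlockB, Matrix.one_apply, h1]
    · rw [hgr, hgr, hyy]
      simp [jordanBlockB]
  · rintro (i | i) (j | j)
    · rw [hgl, hgl, hAexp, hstep, hxx, hxx]
      simp [jordanBlockA]
    · rw [hgl, hgr, hAul]
      simp [jordanBlockA]
    · rw [hgr, hgl, hA, hAul]
      simp [jordanBlockA]
    · rw [hgr, hgr, hAexp, hstep, hyy, hyy]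
      simp [jordanBlockA]
  · intro u hu p
    have hBgu : B (g p) u = 0 := hu p
    rw [hAexp, hBgu, mul_zero, zero_add]
    rcases p with i | j
    · rw [hgl, hstep]
      rcases Nat.lt_or_ge ((i : ℕ) + 1) m with hlt | hge
      · exact hu (Sum.inl ⟨(i : ℕ) + 1, hlt⟩)
      · have heq : (i : ℕ) + 1 = m := by have := i.isLt; omega
        rw [heq, hxm, map_zero, LinearMap.zero_apply]
    · rw [hgr, hstep]
      rcases Nat.eq_zero_or_pos (j : ℕ) with h0 | hpos
      · have : m - 1 - (j : ℕ) + 1 = m := by have := j.isLt; omega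
        rw [this, hy'm, map_zero, LinearMap.zero_apply]
      · have hj := j.isLt
        have he : m - 1 - (j : ℕ) + 1 = m - 1 - ((j : ℕ) - 1) := by omega
        rw [he]
        exact hu (Sum.inr ⟨(j : ℕ) - 1, by omega⟩)

section Lemmas
variable {K V : Type*} [Field K] [AddCommGroup V] [Module K V]

lemma jordanBlockB_isUnit (m : ℕ) : IsUnit (jordanBlockB (K := K) m) := by
  have h : jordanBlockB (K := K) m * Matrix.fromBlocks 0 (-1) (1 : Matrix (Fin m) (Fin m) K) 0
      = 1 := by
    unfold jordanBlockB
    rw [Matrix.fromBlocks_multiply]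
    simp [Matrix.fromBlocks_one]
  have := invertibleOfRightInverse _ _ h
  exact isUnit_of_invertible _

lemma linearIndependent_of_gram [CharZero K] {ι : Type*} [Fintype ι] [DecidableEq ι]
    (B : V →ₗ[K] V →ₗ[K] K) (g : ι → V) (M : Matrix ι ι K)
    (hM : ∀ i j, B (g i) (g j) = M i j) (hMunit : IsUnit M) :
    LinearIndependent K g := by
  rw [Fintype.linearIndependent_iff]
  intro t ht
  have h1 : ∀ j, (t ᵥ* M) j = 0 := by
    intro j
    have h2 := congrArg (fun w => B w (g j)) ht
    simp only [map_sum, LinearMap.coe_sum, Finset.sum_apply, map_zero,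
      LinearMap.zero_apply, _root_.map_smul, LinearMap.smul_apply, smul_eq_mul] at h2
    simp only [Matrix.vecMul, dotProduct]
    rw [← h2]
    exact Finset.sum_congr rfl (fun i _ => by rw [hM])
  have hinj := Matrix.vecMul_injective_iff_isUnit.mpr hMunit
  intro i
  have h0 : t ᵥ* M = 0 ᵥ* M := by
    ext j; rw [h1 j, Matrix.zero_vecMul]; rfl
  have := hinj h0
  rw [this]; rfl

lemma skew_isRefl [CharZero K] {B : V →ₗ[K] V →ₗ[K] K} (hB : ∀ u v, B u v = - B v u) :
    B.IsRefl := by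
  have halt : B.IsAlt := by
    intro x
    have h := hB x x
    have : (2 : K) * B x x = 0 := by linear_combination h
    rcases mul_eq_zero.mp this with h' | h'
    · exact absurd h' two_ne_zero
    · exact h'
  exact halt.isRefl

end Lemmas

section Main
universe u v

lemma jk_trivial {K : Type u} {V : Type v} [Field K] [AddCommGroup V] [Module K V]
    [FiniteDimensional K V] (h : Module.finrank K V = 0)
    (A B : V →ₗ[K] V →ₗ[K] K) :
    ∃ (k : ℕ) (sz : Fin k → ℕ) (_ : ∀ i, 0 < sz i) (eig : Fin k → K)
      (b : Module.Basis ((i : Fin k) × (Fin (sz i) ⊕ Fin (sz i))) K V),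
      BilinForm.toMatrix b A
          = Matrix.blockDiagonal' (fun i => jordanBlockA (eig i) (sz i)) ∧
      BilinForm.toMatrix b B
          = Matrix.blockDiagonal' (fun i => jordanBlockB (sz i)) := by
  have hsub : Subsingleton V := Module.finrank_zero_iff.mp h
  refine ⟨0, Fin.elim0, fun i => i.elim0, Fin.elim0, Module.Basis.empty V, ?_, ?_⟩ <;>
    · ext ⟨i, _⟩ _
      exact i.elim0

theorem jk_aux {K : Type u} [Field K] [IsAlgClosed K] [CharZero K] :
    ∀ (n : ℕ) (V : Type v) [AddCommGroup V] [Module K V] [FiniteDimensional K V],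
      Module.finrank K V ≤ n → ∀ (A B : V →ₗ[K] V →ₗ[K] K),
      (∀ u v, A u v = - A v u) → (∀ u v, B u v = - B v u) → B.Nondegenerate →
      ∃ (k : ℕ) (sz : Fin k → ℕ) (_ : ∀ i, 0 < sz i) (eig : Fin k → K)
        (b : Module.Basis ((i : Fin k) × (Fin (sz i) ⊕ Fin (sz i))) K V),
        BilinForm.toMatrix b A
            = Matrix.blockDiagonal' (fun i => jordanBlockA (eig i) (sz i)) ∧
        BilinForm.toMatrix b B
            = Matrix.blockDiagonal' (fun i => jordanBlockB (sz i)) := by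
  intro n
  induction n with
  | zero =>
    intro V _ _ _ hr A B hA hB hBnd
    exact jk_trivial (by omega) A B
  | succ n ih =>
    intro V _ _ _ hr A B hA hB hBnd
    rcases Nat.eq_zero_or_pos (Module.finrank K V) with h0 | hpos
    · exact jk_trivial h0 A B
    have hnt : Nontrivial V := Module.finrank_pos_iff.mp hpos
    obtain ⟨m, hm, lam, g, hBg, hAg, horth⟩ := exists_jordan_chain A B hA hB hBnd hnt
    have hli : LinearIndependent K g :=
      linearIndependent_of_gram B g _ hBg (jordanBlockB_isUnit m)
    set W : Submodule K V := Submodule.span K (Set.range g) with hWdef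
    set bW : Module.Basis (Fin m ⊕ Fin m) K W := Module.Basis.span hli with hbWdef
    have hbW : ∀ p, ((bW p : W) : V) = g p := fun p => congrArg Subtype.val (Module.Basis.span_apply hli p)
    have hgW : ∀ p, g p ∈ W := fun p => Submodule.subset_span (Set.mem_range_self p)
    have hmatB : LinearMap.BilinForm.toMatrix bW (LinearMap.BilinForm.restrict B W)
        = jordanBlockB m := by
      ext p q
      rw [BilinForm.toMatrix_apply, LinearMap.BilinForm.restrict_apply,
        LinearMap.domRestrict_apply, hbW, hbW, hBg]
    have hWnd : LinearMap.BilinForm.Nondegenerate (LinearMap.BilinForm.restrict B W) := by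
      refine (LinearMap.BilinForm.nondegenerate_iff_det_ne_zero bW).mpr ?_
      rw [hmatB]
      exact ((Matrix.isUnit_iff_isUnit_det _).mp (jordanBlockB_isUnit m)).ne_zero
    have hrefl : B.IsRefl := skew_isRefl hB
    have hcompl : IsCompl W (LinearMap.BilinForm.orthogonal B W) :=
      LinearMap.BilinForm.isCompl_orthogonal_of_restrict_nondegenerate hrefl hWnd
    set W' : Submodule K V := LinearMap.BilinForm.orthogonal B W with hW'def
    have hW'mem : ∀ u ∈ W', ∀ w ∈ W, B w u = 0 := by
      intro u hu w hw
      exact (LinearMap.BilinForm.mem_orthogonal_iff.mp hu) w hw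
    set A' := LinearMap.BilinForm.restrict A W' with hA'def
    set B' := LinearMap.BilinForm.restrict B W' with hB'def
    have hApp : ∀ (u v : W'), A' u v = A (u : V) (v : V) := fun u v => rfl
    have hBpp : ∀ (u v : W'), B' u v = B (u : V) (v : V) := fun u v => rfl
    have hA's : ∀ u v, A' u v = - A' v u := fun u v => hA _ _
    have hB's : ∀ u v, B' u v = - B' v u := fun u v => hB _ _
    have hB'sep : B'.SeparatingLeft := by
      intro u hu
      have huV : ∀ v : V, B (u : V) v = 0 := by
        intro v
        obtain ⟨a, ha, b, hb, rfl⟩ : ∃ a ∈ W, ∃ b ∈ W', a + b = v := by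
          have := hcompl.sup_eq_top
          have hv : v ∈ W ⊔ W' := by rw [this]; exact Submodule.mem_top
          obtain ⟨a, ha, b, hb, h⟩ := Submodule.mem_sup.mp hv
          exact ⟨a, ha, b, hb, h⟩
        rw [map_add]
        have h1 : B (u : V) a = 0 := by
          rw [hB]
          rw [hW'mem u u.2 a ha]
          ring
        have h2 : B (u : V) b = 0 := hu ⟨b, hb⟩
        rw [h1, h2, add_zero]
      have := hBnd.1 (u : V) huV
      exact Subtype.ext this
    have hB'nd : LinearMap.Nondegenerate B' := by
      refine (LinearMap.IsRefl.nondegenerate_iff_separatingLeft ?_).mpr hB'sep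
      intro u v huv
      exact hrefl _ _ huv
    have hrankW : Module.finrank K W = m + m := by
      rw [Module.finrank_eq_card_basis bW]
      simp
    have hrank' : Module.finrank K W' ≤ n := by
      have := Submodule.finrank_add_eq_of_isCompl hcompl
      omega
    obtain ⟨k', sz', hpos', eig', b', hA'm, hB'm⟩ := ih W' hrank' A' B' hA's hB's hB'nd
    -- assemble
    set e : (W × W') ≃ₗ[K] V := Submodule.prodEquivOfIsCompl W W' hcompl with hedef
    set bV : Module.Basis ((Fin m ⊕ Fin m) ⊕ ((i : Fin k') × (Fin (sz' i) ⊕ Fin (sz' i)))) K V :=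
      (bW.prod b').map e with hbVdef
    have hbVl : ∀ p, bV (Sum.inl p) = g p := by
      intro p
      rw [hbVdef, Module.Basis.map_apply, hedef, Submodule.coe_prodEquivOfIsCompl',
        Module.Basis.prod_apply_inl_fst, Module.Basis.prod_apply_inl_snd, hbW]
      simp
    have hbVr : ∀ q, bV (Sum.inr q) = ((b' q : W') : V) := by
      intro q
      rw [hbVdef, Module.Basis.map_apply, hedef, Submodule.coe_prodEquivOfIsCompl',
        Module.Basis.prod_apply_inr_fst, Module.Basis.prod_apply_inr_snd]
      simp
    set sz : Fin (k'+1) → ℕ := Fin.cons m sz' with hszdef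
    set eig : Fin (k'+1) → K := Fin.cons lam eig' with heigdef
    let E : ((Fin m ⊕ Fin m) ⊕ ((i : Fin k') × (Fin (sz' i) ⊕ Fin (sz' i)))) ≃
        ((i : Fin (k'+1)) × (Fin (sz i) ⊕ Fin (sz i))) :=
      { toFun := Sum.elim (fun p => ⟨0, p⟩) (fun q => ⟨q.1.succ, q.2⟩)
        invFun := fun q => Fin.cases
          (motive := fun i => (Fin (sz i) ⊕ Fin (sz i)) →
            ((Fin m ⊕ Fin m) ⊕ ((i : Fin k') × (Fin (sz' i) ⊕ Fin (sz' i)))))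
          (fun p => Sum.inl p) (fun i p => Sum.inr ⟨i, p⟩) q.1 q.2
        left_inv := by rintro (p | ⟨i, p⟩) <;> rfl
        right_inv := by
          rintro ⟨i, p⟩
          induction i using Fin.cases with
          | zero => rfl
          | succ i => rfl }
    have horthB : ∀ (q : (i : Fin k') × (Fin (sz' i) ⊕ Fin (sz' i))) p,
        B (g p) ((b' q : W') : V) = 0 := fun q p => hW'mem _ (b' q).2 (g p) (hgW p)
    have horthA : ∀ (q : (i : Fin k') × (Fin (sz' i) ⊕ Fin (sz' i))) p,
        A (g p) ((b' q : W') : V) = 0 := fun q p => horth _ (fun p' => horthB q p') p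
    refine ⟨k' + 1, sz, fun i => Fin.cases (motive := fun i => 0 < sz i) hm hpos' i, eig,
      bV.reindex E, ?_, ?_⟩
    · ext r s
      rw [BilinForm.toMatrix, BilinForm.toMatrix_apply, Module.Basis.reindex_apply, Module.Basis.reindex_apply]
      obtain ⟨r₀, rfl⟩ := E.surjective r
      obtain ⟨s₀, rfl⟩ := E.surjective s
      rw [Equiv.symm_apply_apply, Equiv.symm_apply_apply]
      rcases r₀ with p | ⟨i, p⟩ <;> rcases s₀ with q | ⟨j, q⟩
      · rw [hbVl, hbVl, hAg,
          show E (Sum.inl p) = (⟨0, p⟩ : (i : Fin (k'+1)) ×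
            (Fin (sz i) ⊕ Fin (sz i))) from rfl,
          show E (Sum.inl q) = (⟨0, q⟩ : (i : Fin (k'+1)) ×
            (Fin (sz i) ⊕ Fin (sz i))) from rfl]
        erw [Matrix.blockDiagonal'_apply_eq]
        rfl
      · rw [hbVl, hbVr,
          show E (Sum.inr ⟨j, q⟩) = (⟨j.succ, q⟩ : (i : Fin (k'+1)) ×
            (Fin (sz i) ⊕ Fin (sz i))) from rfl,
          show E (Sum.inl p) = (⟨0, p⟩ : (i : Fin (k'+1)) ×
            (Fin (sz i) ⊕ Fin (sz i))) from rfl]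
        erw [Matrix.blockDiagonal'_apply_ne _ _ _ (Fin.succ_ne_zero j).symm]
        exact horthA ⟨j, q⟩ p
      · rw [hbVl, hbVr, hA,
          show E (Sum.inr ⟨i, p⟩) = (⟨i.succ, p⟩ : (i : Fin (k'+1)) ×
            (Fin (sz i) ⊕ Fin (sz i))) from rfl,
          show E (Sum.inl q) = (⟨0, q⟩ : (i : Fin (k'+1)) ×
            (Fin (sz i) ⊕ Fin (sz i))) from rfl]
        erw [Matrix.blockDiagonal'_apply_ne _ _ _ (Fin.succ_ne_zero i)]
        rw [horthA ⟨i, p⟩ q, neg_zero]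
      · rw [hbVr, hbVr,
          show E (Sum.inr ⟨i, p⟩) = (⟨i.succ, p⟩ : (i : Fin (k'+1)) ×
            (Fin (sz i) ⊕ Fin (sz i))) from rfl,
          show E (Sum.inr ⟨j, q⟩) = (⟨j.succ, q⟩ : (i : Fin (k'+1)) ×
            (Fin (sz i) ⊕ Fin (sz i))) from rfl]
        have hsmall := congrFun (congrFun hA'm ⟨i, p⟩) ⟨j, q⟩
        rw [BilinForm.toMatrix, BilinForm.toMatrix_apply] at hsmall
        rw [hApp] at hsmall
        by_cases hij : i = j
        · subst hij
          rw [hsmall, Matrix.blockDiagonal'_apply_eq]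
          erw [Matrix.blockDiagonal'_apply_eq]
          rfl
        · rw [hsmall, Matrix.blockDiagonal'_apply_ne _ _ _ hij]
          erw [Matrix.blockDiagonal'_apply_ne _ _ _ (fun hc => hij (Fin.succ_inj.mp hc))]
    · ext r s
      rw [BilinForm.toMatrix, BilinForm.toMatrix_apply, Module.Basis.reindex_apply, Module.Basis.reindex_apply]
      obtain ⟨r₀, rfl⟩ := E.surjective r
      obtain ⟨s₀, rfl⟩ := E.surjective s
      rw [Equiv.symm_apply_apply, Equiv.symm_apply_apply]
      rcases r₀ with p | ⟨i, p⟩ <;> rcases s₀ with q | ⟨j, q⟩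
      · rw [hbVl, hbVl, hBg,
          show E (Sum.inl p) = (⟨0, p⟩ : (i : Fin (k'+1)) ×
            (Fin (sz i) ⊕ Fin (sz i))) from rfl,
          show E (Sum.inl q) = (⟨0, q⟩ : (i : Fin (k'+1)) ×
            (Fin (sz i) ⊕ Fin (sz i))) from rfl]
        erw [Matrix.blockDiagonal'_apply_eq]
        rfl
      · rw [hbVl, hbVr,
          show E (Sum.inr ⟨j, q⟩) = (⟨j.succ, q⟩ : (i : Fin (k'+1)) ×
            (Fin (sz i) ⊕ Fin (sz i))) from rfl,
          show E (Sum.inl p) = (⟨0, p⟩ : (i : Fin (k'+1)) ×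
            (Fin (sz i) ⊕ Fin (sz i))) from rfl]
        erw [Matrix.blockDiagonal'_apply_ne _ _ _ (Fin.succ_ne_zero j).symm]
        exact horthB ⟨j, q⟩ p
      · rw [hbVl, hbVr, hB,
          show E (Sum.inr ⟨i, p⟩) = (⟨i.succ, p⟩ : (i : Fin (k'+1)) ×
            (Fin (sz i) ⊕ Fin (sz i))) from rfl,
          show E (Sum.inl q) = (⟨0, q⟩ : (i : Fin (k'+1)) ×
            (Fin (sz i) ⊕ Fin (sz i))) from rfl]
        erw [Matrix.blockDiagonal'_apply_ne _ _ _ (Fin.succ_ne_zero i)]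
        rw [horthB ⟨i, p⟩ q, neg_zero]
      · rw [hbVr, hbVr,
          show E (Sum.inr ⟨i, p⟩) = (⟨i.succ, p⟩ : (i : Fin (k'+1)) ×
            (Fin (sz i) ⊕ Fin (sz i))) from rfl,
          show E (Sum.inr ⟨j, q⟩) = (⟨j.succ, q⟩ : (i : Fin (k'+1)) ×
            (Fin (sz i) ⊕ Fin (sz i))) from rfl]
        have hsmall := congrFun (congrFun hB'm ⟨i, p⟩) ⟨j, q⟩
        rw [BilinForm.toMatrix, BilinForm.toMatrix_apply] at hsmall
        rw [hBpp] at hsmall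
        by_cases hij : i = j
        · subst hij
          rw [hsmall, Matrix.blockDiagonal'_apply_eq]
          erw [Matrix.blockDiagonal'_apply_eq]
          rfl
        · rw [hsmall, Matrix.blockDiagonal'_apply_ne _ _ _ hij]
          erw [Matrix.blockDiagonal'_apply_ne _ _ _ (fun hc => hij (Fin.succ_inj.mp hc))]

end Main
end JKAux

/-- Jordan–Kronecker theorem, nondegenerate case: for skew-symmetric
bilinear forms `A, B` on a finite-dimensional vector space over an algebraically
closed field of characteristic zero with `B` nondegenerate, there is a basis in
which the matrices of `A` and `B` are simultaneously block-diagonal, each pair of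
blocks being a Jordan block pair `(jordanBlockA λᵢ mᵢ, jordanBlockB mᵢ)`. -/
theorem jordan_kronecker_nondegenerate
    {K V : Type*} [Field K] [IsAlgClosed K] [CharZero K]
    [AddCommGroup V] [Module K V] [FiniteDimensional K V]
    (A B : V →ₗ[K] V →ₗ[K] K)
    (hA : ∀ u v, A u v = - A v u) (hB : ∀ u v, B u v = - B v u)
    (hBnd : B.Nondegenerate) :
    ∃ (k : ℕ) (sz : Fin k → ℕ) (_ : ∀ i, 0 < sz i) (eig : Fin k → K)
      (b : Module.Basis ((i : Fin k) × (Fin (sz i) ⊕ Fin (sz i))) K V),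
      BilinForm.toMatrix b A
          = Matrix.blockDiagonal' (fun i => jordanBlockA (eig i) (sz i)) ∧
      BilinForm.toMatrix b B
          = Matrix.blockDiagonal' (fun i => jordanBlockB (sz i)) := by
  exact jk_aux (Module.finrank K V) V le_rfl A B hA hB hBnd
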